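/- arXiv:1412.2559 — 2 statements merged into one kernel-verified Lean document; each statement's English description precedes it below -/
import Mathlib

section
/- Let G be a graph and let G₁ be the graph obtained from G by subdividing each edge exactly twice (replacing each edge xy by a path x, a_e, b_e, y with new vertices a_e, b_e). Then τ(G₁) = τ(G) + |E(G)|, where τ denotes the vertex cover number. -/
open SimpleGraph

/-- The graph obtained from `G` by subdividing each edge exactly twice:
for each edge `xy` of `G`, the ordered pairs `(x,y)` and `(y,x)` are the two
new subdivision vertices, with `(x,y)` adjacent to `x`, and `(x,y)` adjacent
to `(y,x)`. -/
def doubleSub {V : Type*} (G : SimpleGraph V) : SimpleGraph (V ⊕ (V × V)) :=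
  SimpleGraph.fromRel fun a b =>
    match a, b with
    | Sum.inl x, Sum.inr (p, q) => G.Adj p q ∧ x = p
    | Sum.inr (p, q), Sum.inr (p', q') => G.Adj p q ∧ p' = q ∧ q' = p
    | _, _ => False

/-- The vertex cover number of a graph. -/
noncomputable def tau {V : Type*} (G : SimpleGraph V) : ℕ :=
  sInf {n | ∃ C : Set V, C.ncard = n ∧ ∀ e ∈ G.edgeSet, ∃ x ∈ C, x ∈ e}

section Aux

open Sum

variable {V : Type*} (G : SimpleGraph V)

private lemma dsub_adj_inl_inr (x p q : V) :
    (doubleSub G).Adj (inl x) (inr (p, q)) ↔ G.Adj p q ∧ x = p := by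
  simp [doubleSub, SimpleGraph.fromRel_adj]

private lemma dsub_adj_inr_inr (p q p' q' : V) :
    (doubleSub G).Adj (inr (p, q)) (inr (p', q')) ↔
      ((G.Adj p q ∧ p' = q ∧ q' = p) ∨ (G.Adj p' q' ∧ p = q' ∧ q = p')) := by
  simp only [doubleSub, SimpleGraph.fromRel_adj]
  constructor
  · rintro ⟨-, h⟩; exact h
  · rintro (⟨h, rfl, rfl⟩ | ⟨h, rfl, rfl⟩) <;> exact ⟨by simp [h.ne'], Or.inl (by tauto)⟩

private lemma dsub_not_adj_inl_inl (x y : V) :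
    ¬ (doubleSub G).Adj (inl x) (inl y) := by
  simp [doubleSub, SimpleGraph.fromRel_adj]

private lemma tau_le_of_cover (C : Set V)
    (hC : ∀ e ∈ G.edgeSet, ∃ x ∈ C, x ∈ e) : tau G ≤ C.ncard :=
  Nat.sInf_le ⟨C, rfl, hC⟩

private lemma exists_min_cover :
    ∃ C : Set V, C.ncard = tau G ∧ ∀ e ∈ G.edgeSet, ∃ x ∈ C, x ∈ e := by
  have hne : {n | ∃ C : Set V, C.ncard = n ∧ ∀ e ∈ G.edgeSet, ∃ x ∈ C, x ∈ e}.Nonempty :=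
    ⟨(Set.univ : Set V).ncard, Set.univ, rfl,
      fun e _ => ⟨e.out.1, Set.mem_univ _, Sym2.out_fst_mem e⟩⟩
  exact Nat.sInf_mem hne

private lemma sym2_mk_swap (p : V × V) : Function.uncurry Sym2.mk p.swap = Function.uncurry Sym2.mk p := by
  obtain ⟨a, b⟩ := p; exact (Sym2.eq_swap).symm

private lemma sym2_pair_eq {x y p q : V} (h : s(x, y) = s(p, q)) :
    (x = p ∧ y = q) ∨ (x = q ∧ y = p) := by
  rw [Sym2.eq_iff] at h
  rcases h with h | h <;> [left; right] <;> simp_all [Prod.ext_iff, Prod.swap]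

private lemma mem_mk_fst (p : V × V) : p.1 ∈ Function.uncurry Sym2.mk p := by
  obtain ⟨a, b⟩ := p; exact Sym2.mem_mk_left a b

private lemma mem_mk_snd (p : V × V) : p.2 ∈ Function.uncurry Sym2.mk p := by
  obtain ⟨a, b⟩ := p; exact Sym2.mem_mk_right a b

end Aux

theorem stmt_4 {V : Type*} [Fintype V] (G : SimpleGraph V) :
    tau (doubleSub G) = tau G + G.edgeSet.ncard := by
  classical
  -- Upper bound : tau (doubleSub G) ≤ tau G + |E|
  have hub : tau (doubleSub G) ≤ tau G + G.edgeSet.ncard := by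
    obtain ⟨C, hCcard, hCcov⟩ := exists_min_cover G
    -- choose for each edge an orientation (x, y) with x ∈ C
    have hex : ∀ e : Sym2 V, ∃ p : V × V,
        e ∈ G.edgeSet → (Function.uncurry Sym2.mk p = e ∧ G.Adj p.1 p.2 ∧ p.1 ∈ C) := by
      intro e
      induction e using Sym2.ind with
      | _ x y =>
        by_cases he : G.Adj x y
        · obtain ⟨z, hz, hze⟩ := hCcov s(x, y) he
          rcases Sym2.mem_iff.1 hze with rfl | rfl
          · exact ⟨(z, y), fun _ => ⟨rfl, he, hz⟩⟩
          · exact ⟨(z, x), fun _ => ⟨(Sym2.eq_swap).symm, he.symm, hz⟩⟩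
        · exact ⟨(x, x), fun h => absurd (G.mem_edgeSet.mp h) he⟩
    choose g hg using hex
    set D : Set (V ⊕ (V × V)) :=
      (Sum.inl '' C) ∪ (Sum.inr '' ((Prod.swap ∘ g) '' G.edgeSet)) with hDdef
    have hDcov : ∀ e ∈ (doubleSub G).edgeSet, ∃ x ∈ D, x ∈ e := by
      have key : ∀ p q : V, G.Adj p q →
          (Sum.inl p ∈ D ∨ Sum.inr (p, q) ∈ D) := by
        intro p q hpq
        obtain ⟨hmk, hadj, hmem⟩ := hg s(p, q) hpq
        rcases sym2_pair_eq (x := (g s(p, q)).1) (y := (g s(p, q)).2)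
            (by exact hmk) with ⟨h1, h2⟩ | ⟨h1, h2⟩
        · exact Or.inl (Set.mem_union_left _ ⟨p, h1 ▸ hmem, rfl⟩)
        · refine Or.inr (Set.mem_union_right _ ⟨(p, q), ⟨s(p, q), hpq, ?_⟩, rfl⟩)
          have hgeq : g s(p, q) = (q, p) := by rw [Prod.ext_iff]; exact ⟨h1, h2⟩
          simp [Function.comp, hgeq]
      have key2 : ∀ p q : V, G.Adj p q →
          ∃ z ∈ D, z ∈ s((Sum.inr (p, q) : V ⊕ (V × V)), Sum.inr (q, p)) := by
        intro p q hpq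
        obtain ⟨hmk, hadj, hmem⟩ := hg s(p, q) hpq
        rcases sym2_pair_eq (x := (g s(p, q)).1) (y := (g s(p, q)).2)
            (by exact hmk) with ⟨h1, h2⟩ | ⟨h1, h2⟩
        · have hgeq : g s(p, q) = (p, q) := by rw [Prod.ext_iff]; exact ⟨h1, h2⟩
          refine ⟨Sum.inr (q, p), Set.mem_union_right _ ⟨(q, p), ⟨s(p, q), hpq, ?_⟩, rfl⟩, ?_⟩
          · simp [Function.comp, hgeq]
          · exact Sym2.mem_mk_right _ _
        · have hgeq : g s(p, q) = (q, p) := by rw [Prod.ext_iff]; exact ⟨h1, h2⟩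
          refine ⟨Sum.inr (p, q), Set.mem_union_right _ ⟨(p, q), ⟨s(p, q), hpq, ?_⟩, rfl⟩, ?_⟩
          · simp [Function.comp, hgeq]
          · exact Sym2.mem_mk_left _ _
      intro e he
      induction e using Sym2.ind with
      | _ a b =>
        rw [SimpleGraph.mem_edgeSet] at he
        rcases a with x | ⟨p, q⟩ <;> rcases b with y | ⟨p', q'⟩
        · exact absurd he (dsub_not_adj_inl_inl G x y)
        · obtain ⟨hpq, rfl⟩ := (dsub_adj_inl_inr G x p' q').1 he
          rcases key _ _ hpq with h | h
          · exact ⟨Sum.inl x, h, Sym2.mem_mk_left _ _⟩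
          · exact ⟨Sum.inr (x, q'), h, Sym2.mem_mk_right _ _⟩
        · obtain ⟨hpq, rfl⟩ := (dsub_adj_inl_inr G y p q).1 he.symm
          rcases key _ _ hpq with h | h
          · exact ⟨Sum.inl y, h, Sym2.mem_mk_right _ _⟩
          · exact ⟨Sum.inr (y, q), h, Sym2.mem_mk_left _ _⟩
        · rcases (dsub_adj_inr_inr G p q p' q').1 he with ⟨hpq, rfl, rfl⟩ | ⟨hpq, rfl, rfl⟩
          · obtain ⟨z, hz, hze⟩ := key2 q' p' hpq
            exact ⟨z, hz, hze⟩
          · obtain ⟨z, hz, hze⟩ := key2 q p hpq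
            refine ⟨z, hz, ?_⟩
            rw [Sym2.mem_iff] at hze ⊢
            tauto
    have h1 : tau (doubleSub G) ≤ D.ncard := tau_le_of_cover _ D hDcov
    have h2 : D.ncard ≤ tau G + G.edgeSet.ncard := by
      calc D.ncard ≤ (Sum.inl '' C : Set (V ⊕ (V × V))).ncard
            + (Sum.inr '' ((Prod.swap ∘ g) '' G.edgeSet) : Set (V ⊕ (V × V))).ncard :=
          Set.ncard_union_le _ _
        _ ≤ C.ncard + G.edgeSet.ncard := by
            gcongr
            · exact le_of_eq (Set.ncard_image_of_injective _ Sum.inl_injective)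
            · exact le_trans Set.ncard_image_le Set.ncard_image_le
        _ = tau G + G.edgeSet.ncard := by rw [hCcard]
    exact le_trans h1 h2
  -- Lower bound : tau G + |E| ≤ tau (doubleSub G)
  have hlb : tau G + G.edgeSet.ncard ≤ tau (doubleSub G) := by
    obtain ⟨D, hDcard, hDcov⟩ := exists_min_cover (doubleSub G)
    set C₀ : Set V := {x | Sum.inl x ∈ D} with hC₀def
    set Dr : Set (V × V) := {p | Sum.inr p ∈ D} with hDrdef
    -- choose for each edge an interior vertex lying in D
    have hex : ∀ e : Sym2 V, ∃ p : V × V,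
        e ∈ G.edgeSet → (Function.uncurry Sym2.mk p = e ∧ G.Adj p.1 p.2 ∧ p ∈ Dr) := by
      intro e
      induction e using Sym2.ind with
      | _ x y =>
        by_cases he : G.Adj x y
        · have hmid : (doubleSub G).Adj (Sum.inr (x, y)) (Sum.inr (y, x)) :=
            (dsub_adj_inr_inr G x y y x).2 (Or.inl ⟨he, rfl, rfl⟩)
          obtain ⟨z, hz, hze⟩ := hDcov _ ((doubleSub G).mem_edgeSet.mpr hmid)
          rcases Sym2.mem_iff.1 hze with rfl | rfl
          · exact ⟨(x, y), fun _ => ⟨rfl, he, hz⟩⟩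
          · exact ⟨(y, x), fun _ => ⟨(Sym2.eq_swap).symm, he.symm, hz⟩⟩
        · exact ⟨(x, x), fun h => absurd (G.mem_edgeSet.mp h) he⟩
    choose f hf using hex
    set B : Set (Sym2 V) := {e | e ∈ G.edgeSet ∧ ∀ x ∈ e, Sum.inl x ∉ D} with hBdef
    have hBsub : B ⊆ G.edgeSet := fun e he => he.1
    -- for bad edges, both interior vertices are in D
    have hBswap : ∀ e ∈ B, (f e).swap ∈ Dr := by
      rintro e ⟨he, hnd⟩
      obtain ⟨hmk, hadj, _⟩ := hf e he
      have hmem2 : (f e).2 ∈ e := by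
        have := mem_mk_snd (f e); rwa [hmk] at this
      have hedge : (doubleSub G).Adj (Sum.inl (f e).2) (Sum.inr ((f e).2, (f e).1)) :=
        (dsub_adj_inl_inr G _ _ _).2 ⟨hadj.symm, rfl⟩
      obtain ⟨z, hz, hze⟩ := hDcov _ ((doubleSub G).mem_edgeSet.mpr hedge)
      rcases Sym2.mem_iff.1 hze with rfl | rfl
      · exact absurd hz (hnd _ hmem2)
      · exact hz
    -- the set C covers G
    set C : Set V := C₀ ∪ (fun e => (f e).1) '' B with hCdef
    have hCcov : ∀ e ∈ G.edgeSet, ∃ x ∈ C, x ∈ e := by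
      intro e he
      induction e using Sym2.ind with
      | _ x y =>
        by_cases hx : Sum.inl x ∈ D
        · exact ⟨x, Set.mem_union_left _ hx, Sym2.mem_mk_left _ _⟩
        by_cases hy : Sum.inl y ∈ D
        · exact ⟨y, Set.mem_union_left _ hy, Sym2.mem_mk_right _ _⟩
        have heB : s(x, y) ∈ B := by
          refine ⟨he, ?_⟩
          intro z hz
          rcases Sym2.mem_iff.1 hz with rfl | rfl
          exacts [hx, hy]
        obtain ⟨hmk, _, _⟩ := hf _ heB.1
        refine ⟨(f s(x, y)).1, Set.mem_union_right _ ⟨s(x, y), heB, rfl⟩, ?_⟩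
        have := mem_mk_fst (f s(x, y)); rwa [hmk] at this
    have htauC : tau G ≤ C.ncard := tau_le_of_cover _ C hCcov
    have hCcard : C.ncard ≤ C₀.ncard + B.ncard :=
      le_trans (Set.ncard_union_le _ _) (by gcongr; exact Set.ncard_image_le)
    -- counting interior vertices in D
    have hinjP : Set.InjOn f G.edgeSet := by
      intro e he e' he' h
      rw [← (hf e he).1, ← (hf e' he').1, h]
    have hinjQ : Set.InjOn (fun e => (f e).swap) B := by
      intro e he e' he' h
      have := congrArg (Function.uncurry Sym2.mk) h
      rw [sym2_mk_swap, sym2_mk_swap, (hf e (hBsub he)).1, (hf e' (hBsub he')).1] at this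
      exact this
    have hdisj : Disjoint (f '' G.edgeSet) ((fun e => (f e).swap) '' B) := by
      rw [Set.disjoint_left]
      rintro p ⟨e, he, rfl⟩ ⟨e', he', hswap⟩
      have hee' : e = e' := by
        have := congrArg (Function.uncurry Sym2.mk) hswap
        rw [sym2_mk_swap, (hf e he).1, (hf e' (hBsub he')).1] at this
        exact this.symm
      subst hee'
      have hne : (f e).1 ≠ (f e).2 := (hf e he).2.1.ne
      exact hne (by simpa using congrArg Prod.snd hswap)
    have hsubDr : f '' G.edgeSet ∪ (fun e => (f e).swap) '' B ⊆ Dr := by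
      rintro p (⟨e, he, rfl⟩ | ⟨e, he, rfl⟩)
      · exact (hf e he).2.2
      · exact hBswap e he
    have hDrcard : G.edgeSet.ncard + B.ncard ≤ Dr.ncard := by
      calc G.edgeSet.ncard + B.ncard
          = (f '' G.edgeSet).ncard + ((fun e => (f e).swap) '' B).ncard := by
            rw [Set.ncard_image_of_injOn hinjP, Set.ncard_image_of_injOn hinjQ]
        _ = (f '' G.edgeSet ∪ (fun e => (f e).swap) '' B).ncard :=
            (Set.ncard_union_eq hdisj).symm
        _ ≤ Dr.ncard := Set.ncard_le_ncard hsubDr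
    -- |D| = |C₀| + |Dr|
    have hDeq : D = Sum.inl '' C₀ ∪ Sum.inr '' Dr := by
      ext z
      rcases z with x | p <;> simp [hC₀def, hDrdef]
    have hDcard2 : D.ncard = C₀.ncard + Dr.ncard := by
      rw [hDeq, Set.ncard_union_eq (by
        rw [Set.disjoint_left]; rintro z ⟨x, _, rfl⟩ ⟨p, _, h⟩; cases h),
        Set.ncard_image_of_injective _ Sum.inl_injective,
        Set.ncard_image_of_injective _ Sum.inr_injective]
    calc tau G + G.edgeSet.ncard ≤ (C₀.ncard + B.ncard) + G.edgeSet.ncard := by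
          have := le_trans htauC hCcard; omega
      _ ≤ C₀.ncard + Dr.ncard := by omega
      _ = D.ncard := hDcard2.symm
      _ = tau (doubleSub G) := hDcard
  omega
end

section
/- Let G = (V,E) be a graph with requirement function r : V → ℕ, and suppose X₁, …, X_m ⊆ V are pairwise disjoint non-empty sets such that each G[X_i] is connected and max_{x∈X_i} r(x) > |N_G(X_i)|. Then every vector connectivity set S for (G,r) satisfies |S| ≥ m. -/
open SimpleGraph

/-- A `v`–`S` fan of order `k` in `G`: `k` paths from `v` to vertices of `S`,
with distinct endpoints, pairwise intersecting only in `v`. -/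
def HasFan {V : Type*} (G : SimpleGraph V) (v : V) (S : Set V) (k : ℕ) : Prop :=
  ∃ (t : Fin k → V) (p : ∀ i : Fin k, G.Walk v (t i)),
    Function.Injective t ∧ (∀ i, (p i).IsPath) ∧ (∀ i, t i ∈ S) ∧
    ∀ i j, i ≠ j → ∀ x ∈ (p i).support, x ∈ (p j).support → x = v

/-- `S` is a vector connectivity set for `(G, r)`. -/
def VecConnSet {V : Type*} (G : SimpleGraph V) (r : V → ℕ) (S : Set V) : Prop :=
  ∀ v, v ∉ S → HasFan G v S (r v)

/-- The neighborhood `N_G(X)` of a set of vertices. -/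
def setNbhd {V : Type*} (G : SimpleGraph V) (X : Set V) : Set V :=
  {u | u ∉ X ∧ ∃ x ∈ X, G.Adj x u}

theorem stmt_11 {V : Type*} [Fintype V] (G : SimpleGraph V) (r : V → ℕ)
    (m : ℕ) (X : Fin m → Set V)
    (hdisj : ∀ i j, i ≠ j → Disjoint (X i) (X j))
    (hne : ∀ i, (X i).Nonempty)
    (hconn : ∀ i, (G.induce (X i)).Connected)
    (hreq : ∀ i, ∃ x ∈ X i, (setNbhd G (X i)).ncard < r x)
    (S : Set V) (hS : VecConnSet G r S) :
    m ≤ S.ncard := by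
  classical
  have key : ∀ i, ∃ s, s ∈ X i ∧ s ∈ S := by
    intro i
    by_contra h
    push_neg at h
    obtain ⟨x, hxX, hrx⟩ := hreq i
    have hxS : x ∉ S := fun hs => h x hxX hs
    obtain ⟨t, p, htinj, hpath, htS, hdisjp⟩ := hS x hxS
    have exit : ∀ k : Fin (r x), ∃ u, u ∈ setNbhd G (X i) ∧ u ∈ (p k).support := by
      intro k
      obtain ⟨d, hd, hd1, hd2⟩ := (p k).exists_boundary_dart (X i) hxX
        (fun ht => h _ ht (htS k))
      exact ⟨d.snd, ⟨hd2, d.fst, hd1, d.adj⟩, (p k).dart_snd_mem_support_of_mem_darts hd⟩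
    choose u hu hus using exit
    have huinj : Function.Injective u := by
      intro a b hab
      by_contra hne'
      have hx := hdisjp a b hne' (u a) (hus a) (hab ▸ hus b)
      exact (hu a).1 (hx ▸ hxX)
    have hle : r x ≤ (setNbhd G (X i)).ncard := by
      have hf : Function.Injective (fun k : Fin (r x) =>
          (⟨u k, hu k⟩ : setNbhd G (X i))) := by
        intro a b hab
        exact huinj (congrArg Subtype.val hab)
      have h2 := Nat.card_le_card_of_injective _ hf
      rwa [Nat.card_eq_fintype_card, Fintype.card_fin, Nat.card_coe_set_eq] at h2
    omega
  choose s hsX hsS using key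
  have hsinj : Function.Injective (fun i => (⟨s i, hsS i⟩ : S)) := by
    intro a b hab
    by_contra hne'
    have h1 : s a = s b := congrArg Subtype.val hab
    exact Set.disjoint_left.mp (hdisj a b hne') (hsX a) (h1 ▸ hsX b)
  have h2 := Nat.card_le_card_of_injective _ hsinj
  rwa [Nat.card_eq_fintype_card, Fintype.card_fin, Nat.card_coe_set_eq] at h2
end
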